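/- Let F be a field and let E and A_xx be n×n matrices, A_xv an n×v matrix, A_zx a z×n matrix, A_zv a z×v matrix, C_x a p×n matrix, C_v a p×v matrix, and Φ̄ a v×z matrix over F, and assume the v×v matrix W = 1 − Φ̄*A_zv is invertible. Then for every λ ∈ F, the (n+p+v)×(n+v) matrix [λ•E − A_xx, −A_xv; −C_x, −C_v; −Φ̄*A_zx, W] is of full column rank if and only if the (n+p)×n matrix [λ•E − (A_xx + A_xv*W⁻¹*Φ̄*A_zx); C_x + C_v*W⁻¹*Φ̄*A_zx] is of full column rank. -/

import Mathlib

open Matrix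

/-- With `W = 1 − Φ̄*A_zv` invertible, for every `λ` the matrix
`[λ•E − A_xx, −A_xv; −C_x, −C_v; −Φ̄*A_zx, W]` is of full column rank iff
`[λ•E − (A_xx + A_xv*W⁻¹*Φ̄*A_zx); C_x + C_v*W⁻¹*Φ̄*A_zx]` is. -/
theorem stmt13 {F : Type*} [Field F] {n v z p : ℕ}
    (E Axx : Matrix (Fin n) (Fin n) F) (Axv : Matrix (Fin n) (Fin v) F)
    (Azx : Matrix (Fin z) (Fin n) F) (Azv : Matrix (Fin z) (Fin v) F)
    (Cx : Matrix (Fin p) (Fin n) F) (Cv : Matrix (Fin p) (Fin v) F)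
    (Φ : Matrix (Fin v) (Fin z) F)
    (hW : IsUnit (1 - Φ * Azv)) :
    ∀ l : F,
      Function.Injective (Matrix.fromRows (Matrix.fromRows
          (Matrix.fromCols (l • E - Axx) (-Axv))
          (Matrix.fromCols (-Cx) (-Cv)))
          (Matrix.fromCols (-(Φ * Azx)) (1 - Φ * Azv))).mulVecLin ↔
      Function.Injective (Matrix.fromRows
          (l • E - (Axx + Axv * (1 - Φ * Azv)⁻¹ * Φ * Azx))
          (Cx + Cv * (1 - Φ * Azv)⁻¹ * Φ * Azx)).mulVecLin := by
  intro l
  set W : Matrix (Fin v) (Fin v) F := 1 - Φ * Azv with hWdef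
  have hdet : IsUnit W.det := (Matrix.isUnit_iff_isUnit_det W).mp hW
  have hWW : W⁻¹ * W = 1 := Matrix.nonsing_inv_mul W hdet
  have hWW' : W * W⁻¹ = 1 := Matrix.mul_nonsing_inv W hdet
  rw [← LinearMap.ker_eq_bot, ← LinearMap.ker_eq_bot,
      LinearMap.ker_eq_bot', LinearMap.ker_eq_bot']
  simp only [Matrix.mulVecLin_apply]
  -- key algebraic identities
  have key1 : ∀ x : Fin n → F,
      (l • E - Axx) *ᵥ x + (-Axv) *ᵥ ((W⁻¹ * (Φ * Azx)) *ᵥ x)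
        = (l • E - (Axx + Axv * W⁻¹ * Φ * Azx)) *ᵥ x := by
    intro x
    have hm : Axv * (W⁻¹ * (Φ * Azx)) = Axv * W⁻¹ * Φ * Azx := by
      simp only [Matrix.mul_assoc]
    rw [Matrix.neg_mulVec, Matrix.mulVec_mulVec, hm, ← Matrix.neg_mulVec,
        ← Matrix.add_mulVec, sub_add_eq_sub_sub, ← sub_eq_add_neg]
  have key2 : ∀ x : Fin n → F,
      (-Cx) *ᵥ x + (-Cv) *ᵥ ((W⁻¹ * (Φ * Azx)) *ᵥ x)
        = -((Cx + Cv * W⁻¹ * Φ * Azx) *ᵥ x) := by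
    intro x
    have hm : -Cx + -Cv * (W⁻¹ * (Φ * Azx)) = -(Cx + Cv * W⁻¹ * Φ * Azx) := by
      simp only [Matrix.neg_mul, Matrix.mul_assoc, neg_add]
    rw [Matrix.mulVec_mulVec, ← Matrix.add_mulVec, hm, Matrix.neg_mulVec]
  have key3 : ∀ x : Fin n → F,
      (-(Φ * Azx)) *ᵥ x + W *ᵥ ((W⁻¹ * (Φ * Azx)) *ᵥ x) = 0 := by
    intro x
    rw [Matrix.mulVec_mulVec, ← Matrix.mul_assoc, hWW', Matrix.one_mul,
        Matrix.neg_mulVec, neg_add_cancel]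
  constructor
  · intro h x hx
    have h1 : (l • E - (Axx + Axv * W⁻¹ * Φ * Azx)) *ᵥ x = 0 := by
      funext i; exact congrFun hx (Sum.inl i)
    have h2 : (Cx + Cv * W⁻¹ * Φ * Azx) *ᵥ x = 0 := by
      funext i; exact congrFun hx (Sum.inr i)
    set y := (W⁻¹ * (Φ * Azx)) *ᵥ x with hy
    have hu := h (Sum.elim x y) ?_
    · funext i; exact congrFun hu (Sum.inl i)
    · simp only [Matrix.fromRows_mulVec, Matrix.fromCols_mulVec_sumElim]
      funext i
      rcases i with (i | i) | i
      · simp only [Sum.elim_inl, Sum.elim_inr, Pi.zero_apply]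
        rw [hy, key1 x, h1, Pi.zero_apply]
      · simp only [Sum.elim_inl, Sum.elim_inr, Pi.zero_apply]
        rw [hy, key2 x, h2, neg_zero, Pi.zero_apply]
      · simp only [Sum.elim_inl, Sum.elim_inr, Pi.zero_apply]
        rw [hy, key3 x, Pi.zero_apply]
  · intro h u hu
    set x := u ∘ Sum.inl with hx
    set y := u ∘ Sum.inr with hy
    have hue : u = Sum.elim x y := by funext i; cases i <;> rfl
    rw [hue] at hu
    simp only [Matrix.fromRows_mulVec, Matrix.fromCols_mulVec_sumElim] at hu
    have b1 : (l • E - Axx) *ᵥ x + (-Axv) *ᵥ y = 0 := by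
      funext i; exact congrFun hu (Sum.inl (Sum.inl i))
    have b2 : (-Cx) *ᵥ x + (-Cv) *ᵥ y = 0 := by
      funext i; exact congrFun hu (Sum.inl (Sum.inr i))
    have b3 : (-(Φ * Azx)) *ᵥ x + W *ᵥ y = 0 := by
      funext i; exact congrFun hu (Sum.inr i)
    have hyx : y = (W⁻¹ * (Φ * Azx)) *ᵥ x := by
      have : W *ᵥ y = (Φ * Azx) *ᵥ x := by
        rw [Matrix.neg_mulVec] at b3
        linear_combination (norm := module) b3
      calc y = (W⁻¹ * W) *ᵥ y := by rw [hWW, Matrix.one_mulVec]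
        _ = W⁻¹ *ᵥ (W *ᵥ y) := by rw [Matrix.mulVec_mulVec]
        _ = W⁻¹ *ᵥ ((Φ * Azx) *ᵥ x) := by rw [this]
        _ = _ := by rw [Matrix.mulVec_mulVec]
    rw [hyx] at b1 b2
    rw [key1 x] at b1
    rw [key2 x, neg_eq_zero] at b2
    have hx0 : x = 0 := by
      apply h
      simp only [Matrix.fromRows_mulVec]
      funext i
      rcases i with i | i
      · simpa using congrFun b1 i
      · simpa using congrFun b2 i
    rw [hue, hyx, hx0]
    simp
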